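/- Let H : ℕ → ℕ satisfy H 0 = 1 and, for every n ≥ 1, H n = n · Σ_{i=1}^{n} C(n−1, i−1) · i^(i−2) · H(n−i), where i^(i−2) uses truncated natural-number subtraction in the exponent (so the i = 1 term has i^(i−2) = 1^0 = 1, consistent with the intended value 1^(−1) = 1). Then H n = nⁿ for every n ≥ 1. -/

import Mathlib

open Finset

/-- Alternating-sum shift kernel. -/
def Sfd (n j : ℕ) (x : ℚ) : ℚ :=
  ∑ k ∈ Finset.range (n+1), (-1:ℚ)^k * (n.choose k) * (x + k)^j

lemma Sfd_succ (n j : ℕ) (x : ℚ) : Sfd (n+1) j x = Sfd n j x - Sfd n j (x+1) := by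
  unfold Sfd
  rw [Finset.sum_range_succ' _ (n+1)]
  have h1 : ∀ i ∈ Finset.range (n+1),
      (-1:ℚ)^(i+1) * ((n+1).choose (i+1)) * (x + (i+1:ℕ))^j
      = -((-1:ℚ)^i * (n.choose i) * ((x+1) + i)^j)
        + (-((-1:ℚ)^i * (n.choose (i+1)) * (x + (i+1:ℕ))^j)) := by
    intro i _
    rw [Nat.choose_succ_succ]
    push_cast
    ring
  rw [Finset.sum_congr rfl h1, Finset.sum_add_distrib]
  have h2 : ∑ i ∈ Finset.range (n+1), -((-1:ℚ)^i * (n.choose i) * ((x+1) + i)^j)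
      = - ∑ k ∈ Finset.range (n+1), (-1:ℚ)^k * (n.choose k) * ((x+1) + k)^j := by
    rw [← Finset.sum_neg_distrib]
  have h3 : (∑ i ∈ Finset.range (n+1), -((-1:ℚ)^i * (n.choose (i+1)) * (x + (i+1:ℕ))^j))
      + (-1:ℚ)^0 * ((n+1).choose 0) * (x + (0:ℕ))^j
      = ∑ k ∈ Finset.range (n+1), (-1:ℚ)^k * (n.choose k) * (x + k)^j := by
    rw [Finset.sum_range_succ]
    simp only [Nat.choose_succ_self, Nat.cast_zero, mul_zero, zero_mul, neg_zero, add_zero]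
    rw [Finset.sum_range_succ' _ n]
    have h4 : ∀ i ∈ Finset.range n, -((-1:ℚ)^i * (n.choose (i+1)) * (x + (i+1:ℕ))^j)
        = (-1:ℚ)^(i+1) * (n.choose (i+1)) * (x + (i+1:ℕ))^j := by
      intro i _; ring
    rw [Finset.sum_congr rfl h4]
    simp
  rw [h2]
  linarith [h3]

lemma Sfd_eq_zero : ∀ n j, j < n → ∀ x : ℚ, Sfd n j x = 0 := by
  intro n
  induction n with
  | zero => intro j hj; omega
  | succ n IH =>
    intro j hj x
    rw [Sfd_succ]
    have key : Sfd n j (x+1) - Sfd n j x = ∑ i ∈ Finset.range j, (j.choose i : ℚ) * Sfd n i x := by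
      unfold Sfd
      rw [← Finset.sum_sub_distrib]
      have hk : ∀ k ∈ Finset.range (n+1),
          (-1:ℚ)^k * (n.choose k) * ((x+1) + k)^j - (-1:ℚ)^k * (n.choose k) * (x + k)^j
          = ∑ i ∈ Finset.range j, (j.choose i : ℚ) * ((-1:ℚ)^k * (n.choose k) * (x + k)^i) := by
        intro k _
        have hpow : ((x+1) + (k:ℚ))^j = ((x+k) + 1)^j := by ring_nf
        rw [hpow, add_pow, Finset.sum_range_succ]
        simp only [one_pow, mul_one, Nat.choose_self, Nat.cast_one]
        rw [mul_add, add_sub_cancel_right, Finset.mul_sum]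
        exact Finset.sum_congr rfl fun i _ => by ring
      rw [Finset.sum_congr rfl hk, Finset.sum_comm]
      exact Finset.sum_congr rfl fun i _ => by rw [Finset.mul_sum]
    have hz : ∀ i ∈ Finset.range j, (j.choose i : ℚ) * Sfd n i x = 0 := by
      intro i hi
      rw [Finset.mem_range] at hi
      rw [IH i (by omega) x, mul_zero]
    rw [Finset.sum_congr rfl hz, Finset.sum_const_zero] at key
    linarith [key]

open Polynomial in
lemma abel (x : ℚ) : ∀ n : ℕ,
    (∑ k ∈ Finset.Icc 1 n, C ((n.choose k : ℚ) * x * (x+k)^(k-1)) * (X + C ((n:ℚ)-k))^(n-k))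
      + (X + C (n:ℚ))^n = (X + C (x+n))^n := by
  intro n
  induction n with
  | zero => simp
  | succ n IH =>
    simp only [Nat.cast_add, Nat.cast_one]
    -- the composed induction hypothesis
    have IH' : (∑ k ∈ Finset.Icc 1 n, C ((n.choose k : ℚ) * x * (x+k)^(k-1))
          * (X + C (((n:ℚ)+1)-k))^(n-k)) + (X + C ((n:ℚ)+1))^n = (X + C (x+(n:ℚ)+1))^n := by
      have h := congrArg (fun p : Polynomial ℚ => p.comp (X + Polynomial.C 1)) IH
      simp only [add_comp, Polynomial.sum_comp, mul_comp, pow_comp, X_comp, C_comp] at h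
      calc (∑ k ∈ Finset.Icc 1 n, C ((n.choose k : ℚ) * x * (x+k)^(k-1))
              * (X + C (((n:ℚ)+1)-k))^(n-k)) + (X + C ((n:ℚ)+1))^n
          = (∑ k ∈ Finset.Icc 1 n, C ((n.choose k : ℚ) * x * (x+k)^(k-1))
              * (X + C 1 + C ((n:ℚ)-k))^(n-k)) + (X + C 1 + C (n:ℚ))^n := by
            congr 1
            · refine Finset.sum_congr rfl fun k _ => ?_
              rw [show ((n:ℚ)+1-k) = 1 + ((n:ℚ)-k) from by ring, C_add, ← add_assoc]
            · rw [show ((n:ℚ)+1) = 1 + (n:ℚ) from by ring, C_add, ← add_assoc]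
        _ = (X + C 1 + C (x+(n:ℚ)))^n := h
        _ = (X + C (x+(n:ℚ)+1))^n := by
            rw [add_assoc, ← C_add, show (1:ℚ) + (x+(n:ℚ)) = x+(n:ℚ)+1 from by ring]
    set L : Polynomial ℚ := (∑ k ∈ Finset.Icc 1 (n+1),
        C (((n+1).choose k : ℚ) * x * (x+k)^(k-1)) * (X + C (((n:ℚ)+1)-k))^(n+1-k))
        + (X + C ((n:ℚ)+1))^(n+1) with hL
    set R : Polynomial ℚ := (X + C (x+((n:ℚ)+1)))^(n+1) with hR
    have hterm : ∀ k ∈ Finset.Icc 1 (n+1),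
        derivative (C (((n+1).choose k : ℚ) * x * (x+k)^(k-1)) * (X + C (((n:ℚ)+1)-k))^(n+1-k))
        = C ((n:ℚ)+1) * (C ((n.choose k : ℚ) * x * (x+k)^(k-1)) * (X + C (((n:ℚ)+1)-k))^(n-k)) := by
      intro k hk
      rw [Finset.mem_Icc] at hk
      rw [derivative_mul, derivative_C, zero_mul, zero_add, derivative_pow,
        derivative_add, derivative_X, derivative_C, add_zero, mul_one]
      have he : n + 1 - k - 1 = n - k := by omega
      rw [he]
      have hc : ((n+1-k : ℕ) : ℚ) * (((n+1).choose k : ℕ) : ℚ) = ((n:ℚ)+1) * ((n.choose k : ℕ) : ℚ) := by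
        have h1 := Nat.choose_mul_succ_eq n k
        have h2 : ((n.choose k * (n+1) : ℕ) : ℚ) = (((n+1).choose k * (n+1-k) : ℕ) : ℚ) := by
          exact_mod_cast congrArg (Nat.cast : ℕ → ℚ) h1
        rw [Nat.cast_mul, Nat.cast_mul] at h2
        push_cast at h2 ⊢
        linarith
      calc C (((n+1).choose k : ℚ) * x * (x+k)^(k-1)) * (C (((n+1-k : ℕ)) : ℚ) * (X + C (((n:ℚ)+1)-k))^(n-k))
          = C ((((n+1-k : ℕ)) : ℚ) * (((n+1).choose k : ℚ) * x * (x+k)^(k-1))) * (X + C (((n:ℚ)+1)-k))^(n-k) := by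
            rw [← mul_assoc, ← C_mul]; ring_nf
        _ = C (((n:ℚ)+1) * ((n.choose k : ℚ) * x * (x+k)^(k-1))) * (X + C (((n:ℚ)+1)-k))^(n-k) := by
            congr 1
            rw [C_inj]
            linear_combination (x * (x+(k:ℚ))^(k-1)) * hc
        _ = C ((n:ℚ)+1) * (C ((n.choose k : ℚ) * x * (x+k)^(k-1)) * (X + C (((n:ℚ)+1)-k))^(n-k)) := by
            rw [C_mul, mul_assoc]
    have hd1 : derivative ((X + C ((n:ℚ)+1))^(n+1)) = C ((n:ℚ)+1) * (X + C ((n:ℚ)+1))^n := by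
      rw [derivative_pow, derivative_add, derivative_X, derivative_C, add_zero, mul_one,
        Nat.add_sub_cancel]
      congr 2
      push_cast; ring
    have hderL : derivative L = C ((n:ℚ)+1) * (X + C (x+(n:ℚ)+1))^n := by
      rw [hL, derivative_add, derivative_sum, Finset.sum_congr rfl hterm, ← Finset.mul_sum,
        hd1, ← mul_add]
      rw [Finset.sum_Icc_succ_top (by omega : 1 ≤ n+1), Nat.choose_succ_self]
      simp only [Nat.cast_zero, zero_mul, map_zero, add_zero]
      rw [IH']
    have hderR : derivative R = C ((n:ℚ)+1) * (X + C (x+(n:ℚ)+1))^n := by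
      rw [hR, derivative_pow, derivative_add, derivative_X, derivative_C, add_zero, mul_one,
        Nat.add_sub_cancel]
      congr 2
      · push_cast; ring
      · ring_nf
    have hd0 : derivative (L - R) = 0 := by rw [derivative_sub, hderL, hderR, sub_self]
    have hCc := Polynomial.eq_C_of_derivative_eq_zero hd0
    set t : ℚ := -(x + ((n:ℚ)+1)) with ht
    have hRt : R.eval t = 0 := by
      rw [hR]
      simp only [eval_pow, eval_add, eval_X, eval_C, ht]
      rw [show -(x + ((n:ℚ)+1)) + (x+((n:ℚ)+1)) = 0 from by ring]
      simp
    have hLt : L.eval t = 0 := by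
      have hS := Sfd_eq_zero (n+1) n (Nat.lt_succ_self n) x
      unfold Sfd at hS
      rw [Finset.sum_range_succ' _ (n+1)] at hS
      rw [hL]
      simp only [eval_add, eval_pow, eval_finset_sum, eval_mul, eval_C, eval_X]
      rw [← Finset.Ico_add_one_right_eq_Icc, Finset.sum_Ico_eq_sum_range]
      have hmain : (∑ i ∈ Finset.range (n+1+1-1),
            (((n+1).choose (1+i) : ℚ) * x * (x+(1+i:ℕ))^((1+i)-1)) * (t + (((n:ℚ)+1)-(1+i:ℕ)))^(n+1-(1+i)))
            + (t + ((n:ℚ)+1))^(n+1)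
          = (-1:ℚ)^(n+1) * x * ((∑ i ∈ Finset.range (n+1),
              (-1:ℚ)^(i+1) * (((n+1).choose (i+1) : ℕ) : ℚ) * (x + (i+1:ℕ))^n)
            + (-1:ℚ)^0 * (((n+1).choose 0 : ℕ) : ℚ) * (x + (0:ℕ))^n) := by
        rw [mul_add, Finset.mul_sum]
        congr 1
        · refine Finset.sum_congr (by norm_num) fun i hi => ?_
          rw [Finset.mem_range] at hi
          have e1 : 1 + i - 1 = i := by omega
          have e2 : n + 1 - (1 + i) = n - i := by omega
          have hcast : ((n+1).choose (1+i)) = ((n+1).choose (i+1)) := by rw [Nat.add_comm 1 i]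
          have e4 : t + ((n:ℚ)+1-((1+i:ℕ):ℚ)) = -(x + ((1+i:ℕ):ℚ)) := by
            rw [ht]; push_cast; ring
          rw [e1, e2, hcast, e4, neg_pow]
          have hp : (x + ((1+i:ℕ):ℚ))^i * (x + ((1+i:ℕ):ℚ))^(n-i) = (x + ((1+i:ℕ):ℚ))^n := by
            rw [← pow_add]; congr 1; omega
          have hs : ((-1:ℚ))^(n-i) = (-1)^(n+1) * (-1)^(i+1) := by
            rw [← pow_add, show (n+1)+(i+1) = (n-i)+2*(i+1) from by omega, pow_add, pow_mul,
              neg_one_sq, one_pow, mul_one]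
          push_cast at hp hs ⊢
          linear_combination ((((n+1).choose (i+1) : ℕ) : ℚ) * x * (x + (1+(i:ℚ)))^i * (x + (1+(i:ℚ)))^(n-i)) * hs
            + ((((n+1).choose (i+1) : ℕ) : ℚ) * x * (-1:ℚ)^(n+1) * (-1:ℚ)^(i+1)) * hp
        · rw [ht, show -(x + ((n:ℚ)+1)) + ((n:ℚ)+1) = -x from by ring, neg_pow]
          simp only [Nat.choose_zero_right, Nat.cast_one, Nat.cast_zero, pow_zero, one_mul,
            mul_one, add_zero]
          ring
      rw [hmain, hS, mul_zero]
    have hc0 : L = R := by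
      have he := congrArg (Polynomial.eval t) hCc
      rw [eval_sub, hLt, hRt, eval_C, sub_zero] at he
      have : L - R = 0 := by rw [hCc, ← he]; simp
      exact sub_eq_zero.mp this
    exact hc0

lemma abel_eval (x : ℚ) (n : ℕ) :
    (∑ k ∈ Finset.Icc 1 n, (n.choose k : ℚ) * x * (x+k)^(k-1) * ((n:ℚ)-k)^(n-k)) + (n:ℚ)^n
      = (x+(n:ℚ))^n := by
  have h := congrArg (Polynomial.eval 0) (abel x n)
  simp only [Polynomial.eval_add, Polynomial.eval_pow, Polynomial.eval_finset_sum,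
    Polynomial.eval_mul, Polynomial.eval_C, Polynomial.eval_X, zero_add] at h
  rw [← h]

lemma key (n : ℕ) (hn : 1 ≤ n) :
    (∑ i ∈ Finset.Icc 1 n, (n-1).choose (i-1) * i^(i-2) * (n-i)^(n-i)) = n^(n-1) := by
  obtain ⟨m, rfl⟩ : ∃ m, n = m + 1 := ⟨n-1, by omega⟩
  have habel := abel_eval 1 m
  have h1mem : (1:ℕ) ∈ Finset.Icc 1 (m+1) := by simp
  have hcast : ((∑ i ∈ Finset.Icc 1 (m+1),
        (m+1-1).choose (i-1) * i^(i-2) * (m+1-i)^(m+1-i) : ℕ) : ℚ)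
      = (((m+1)^(m+1-1) : ℕ) : ℚ) := by
    push_cast [Nat.add_sub_cancel]
    rw [← Finset.add_sum_erase _ _ h1mem, Finset.Icc_erase_left, ← Finset.Icc_add_one_left_eq_Ioc,
      ← Finset.Ico_add_one_right_eq_Icc, Finset.sum_Ico_eq_sum_range]
    rw [show (1:ℕ)+1 = 2 from rfl, show m+1+1-2 = m from by omega]
    rw [← Finset.Ico_add_one_right_eq_Icc, Finset.sum_Ico_eq_sum_range, show m+1-1 = m from by omega] at habel
    have hterm : ∀ j ∈ Finset.range m,
        ((m.choose ((2+j)-1) : ℕ) : ℚ) * ((2+j:ℕ):ℚ)^((2+j)-2) * ((m+1-(2+j):ℕ):ℚ)^(m+1-(2+j))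
        = ((m.choose (1+j) : ℕ) : ℚ) * 1 * (1+((1+j:ℕ):ℚ))^((1+j)-1) * ((m:ℚ)-((1+j:ℕ):ℚ))^(m-(1+j)) := by
      intro j hj
      rw [Finset.mem_range] at hj
      rw [show (2+j)-1 = 1+j from by omega, show (2+j)-2 = j from by omega,
        show m+1-(2+j) = m-(1+j) from by omega, show (1+j)-1 = j from by omega,
        Nat.cast_sub (by omega : 1+j ≤ m)]
      push_cast
      ring
    rw [Finset.sum_congr rfl hterm]
    have h1t : ((m.choose (1-1) : ℕ) : ℚ) * ((1:ℕ):ℚ)^(1-2) * ((m+1-1:ℕ):ℚ)^(m+1-1) = (m:ℚ)^m := by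
      norm_num
    rw [h1t]
    push_cast at habel ⊢
    have hb : ((1:ℚ)+(m:ℚ))^m = ((m:ℚ)+1)^m := by ring_nf
    rw [hb] at habel
    linarith [habel]
  exact_mod_cast hcast

/-- The number `H n` of complete τ-exceptional sequences over the self-injective
Nakayama algebra `Λ_n^n`, determined by the recurrence
`H n = n * Σ_{i=1}^n C(n-1, i-1) * i^(i-2) * H (n-i)` with `H 0 = 1`,
equals `n ^ n` for every `n ≥ 1`. -/
theorem H_eq_pow (H : ℕ → ℕ) (hH0 : H 0 = 1)
    (hH : ∀ n : ℕ, 1 ≤ n →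
      H n = n * ∑ i ∈ Finset.Icc 1 n,
        Nat.choose (n - 1) (i - 1) * i ^ (i - 2) * H (n - i)) :
    ∀ n : ℕ, 1 ≤ n → H n = n ^ n := by
  intro n
  induction n using Nat.strong_induction_on with
  | _ n IHn =>
    intro hn
    rw [hH n hn]
    have hsum : ∀ i ∈ Finset.Icc 1 n,
        (n-1).choose (i-1) * i^(i-2) * H (n-i) = (n-1).choose (i-1) * i^(i-2) * (n-i)^(n-i) := by
      intro i hi
      rw [Finset.mem_Icc] at hi
      rcases eq_or_lt_of_le hi.2 with h | h
      · rw [show n - i = 0 from by omega, hH0, pow_zero]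
      · rw [IHn (n-i) (by omega) (by omega)]
    rw [Finset.sum_congr rfl hsum, key n hn, ← pow_succ']
    congr 1
    omega
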